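/- For every ordinal α with 0 < α < ε₀, the Ackermann function A_α is strictly monotone in its argument: for all x, y ∈ ℕ, if y > x then A_α(y) > A_α(x). -/

import Mathlib

open ONote Ordinal

/-- The Ackermann hierarchy `A_α` (meaningful for `0 < α`): `A_1(x) = 2x`,
`A_{α+1}(x) = A_α^[x](1)`, `A_λ(x) = A_{λ(x)}(x)`. -/
def Ack : ONote → ℕ → ℕ
  | o =>
    match fundamentalSequence o, fundamentalSequence_has_prop o with
    | Sum.inl none, _ => fun _ => 0
    | Sum.inl (some a), hp =>
      have : a < o := by rw [lt_def, hp.1]; exact Order.lt_succ _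
      if a = 0 then fun x => 2 * x else fun x => (Ack a)^[x] 1
    | Sum.inr f, hp => fun i =>
      have : f i < o := (hp.2.1 i).2.1
      Ack (f i) i
  termination_by o => o

@[nolint unusedHavesSuffices]
theorem Ack_def {o : ONote} {x} (e : fundamentalSequence o = x) :
    Ack o =
      match
        (motive := (x : Option ONote ⊕ (ℕ → ONote)) → FundamentalSequenceProp o x → ℕ → ℕ)
        x, e ▸ fundamentalSequence_has_prop o with
      | Sum.inl none, _ => fun _ => 0
      | Sum.inl (some a), _ =>
        if a = 0 then fun x => 2 * x else fun x => (Ack a)^[x] 1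
      | Sum.inr f, _ => fun i => Ack (f i) i := by
  subst x
  rw [Ack]

theorem Ack_zero' {o : ONote} (h : fundamentalSequence o = Sum.inl none) :
    Ack o = fun _ => 0 := by rw [Ack_def h]

theorem Ack_succ' {o a : ONote} (h : fundamentalSequence o = Sum.inl (some a)) :
    Ack o = if a = 0 then fun x => 2 * x else fun x => (Ack a)^[x] 1 := by rw [Ack_def h]

theorem Ack_limit' {o : ONote} {f} (h : fundamentalSequence o = Sum.inr f) :
    Ack o = fun i => Ack (f i) i := by rw [Ack_def h]

theorem fs_tail_limit {a : ONote} {m : ℕ+} {b : ONote} {f : ℕ → ONote}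
    (h : fundamentalSequence b = Sum.inr f) :
    fundamentalSequence (oadd a m b) = Sum.inr (fun i => oadd a m (f i)) := by
  rw [fundamentalSequence, h]

theorem fs_tail_succ {a : ONote} {m : ℕ+} {b b' : ONote}
    (h : fundamentalSequence b = Sum.inl (some b')) :
    fundamentalSequence (oadd a m b) = Sum.inl (some (oadd a m b')) := by
  rw [fundamentalSequence, h]

theorem fs_zz {a : ONote} {m : ℕ+} (ha : fundamentalSequence a = Sum.inl none)
    (hm : m.natPred = 0) :
    fundamentalSequence (oadd a m 0) = Sum.inl (some 0) := by
  rw [fundamentalSequence, ha, hm]; rfl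

theorem fs_zs {a : ONote} {m : ℕ+} {k : ℕ} (ha : fundamentalSequence a = Sum.inl none)
    (hm : m.natPred = k + 1) :
    fundamentalSequence (oadd a m 0) = Sum.inl (some (oadd 0 k.succPNat 0)) := by
  rw [fundamentalSequence, ha, hm]; rfl

theorem fs_sz {a a' : ONote} {m : ℕ+} (ha : fundamentalSequence a = Sum.inl (some a'))
    (hm : m.natPred = 0) :
    fundamentalSequence (oadd a m 0) = Sum.inr (fun i => oadd a' i.succPNat 0) := by
  rw [fundamentalSequence, ha, hm]; rfl

theorem fs_ss {a a' : ONote} {m : ℕ+} {k : ℕ} (ha : fundamentalSequence a = Sum.inl (some a'))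
    (hm : m.natPred = k + 1) :
    fundamentalSequence (oadd a m 0) = Sum.inr (fun i => oadd a k.succPNat (oadd a' i.succPNat 0)) := by
  rw [fundamentalSequence, ha, hm]; rfl

theorem fs_lz {a : ONote} {g : ℕ → ONote} {m : ℕ+} (ha : fundamentalSequence a = Sum.inr g)
    (hm : m.natPred = 0) :
    fundamentalSequence (oadd a m 0) = Sum.inr (fun i => oadd (g i) 1 0) := by
  rw [fundamentalSequence, ha, hm]; rfl

theorem fs_ls {a : ONote} {g : ℕ → ONote} {m : ℕ+} {k : ℕ} (ha : fundamentalSequence a = Sum.inr g)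
    (hm : m.natPred = k + 1) :
    fundamentalSequence (oadd a m 0) = Sum.inr (fun i => oadd a k.succPNat (oadd (g i) 1 0)) := by
  rw [fundamentalSequence, ha, hm]; rfl

/-- one step down: predecessor, or `n`-th element of the fundamental sequence. -/
inductive AStep (n : ℕ) : ONote → ONote → Prop
  | succ {o a : ONote} : fundamentalSequence o = Sum.inl (some a) → AStep n o a
  | limit {o : ONote} {f : ℕ → ONote} : fundamentalSequence o = Sum.inr f → AStep n o (f n)

/-- reachability by step-downs with parameter `n`. -/
def AReach (n : ℕ) : ONote → ONote → Prop := Relation.ReflTransGen (AStep n)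

theorem AStep.lt {n : ℕ} {o p : ONote} (h : AStep n o p) : p < o := by
  cases h with
  | succ e =>
    have hp := fundamentalSequence_has_prop o
    rw [e] at hp
    rw [lt_def, hp.1]; exact Order.lt_succ _
  | limit e =>
    have hp := fundamentalSequence_has_prop o
    rw [e] at hp
    exact (hp.2.1 _).2.1

theorem AReach.refl {n : ℕ} {o : ONote} : AReach n o o := Relation.ReflTransGen.refl

theorem AReach.trans {n : ℕ} {a b c : ONote} (h : AReach n a b) (h' : AReach n b c) :
    AReach n a c := Relation.ReflTransGen.trans h h'

theorem AStep.reach {n : ℕ} {a b : ONote} (h : AStep n a b) : AReach n a b :=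
  Relation.ReflTransGen.single h

theorem reach_zero (n : ℕ) (o : ONote) : AReach n o 0 := by
  rcases e : fundamentalSequence o with (_ | a) | f
  · have hp := fundamentalSequence_has_prop o
    rw [e] at hp
    rw [hp]; exact AReach.refl
  · have h1 : AStep n o a := .succ e
    have : a < o := h1.lt
    exact Relation.ReflTransGen.head h1 (reach_zero n a)
  · have h1 : AStep n o (f n) := .limit e
    have : f n < o := h1.lt
    exact Relation.ReflTransGen.head h1 (reach_zero n (f n))
  termination_by o

theorem astep_under {n : ℕ} {t t' : ONote} (h : AStep n t t') (a : ONote) (m : ℕ+) :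
    AStep n (oadd a m t) (oadd a m t') := by
  cases h with
  | succ ht => exact .succ (fs_tail_succ ht)
  | limit ht => exact .limit (fs_tail_limit ht)

theorem areach_under {n : ℕ} {t t' : ONote} (h : AReach n t t') (a : ONote) (m : ℕ+) :
    AReach n (oadd a m t) (oadd a m t') :=
  Relation.ReflTransGen.lift (fun t => oadd a m t) (fun _ _ h => astep_under h a m) _ _ h

/-- `ω^a · (j+2)  ⟶ₙ*  ω^a · (j+1)` -/
theorem reach_coeff (n : ℕ) (a : ONote) (j : ℕ) :
    AReach n (oadd a (j + 1).succPNat 0) (oadd a j.succPNat 0) := by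
  have hm : (j + 1).succPNat.natPred = j + 1 := Nat.natPred_succPNat _
  rcases e : fundamentalSequence a with (_ | a') | g
  · have hp := fundamentalSequence_has_prop a
    rw [e] at hp
    subst hp
    exact (AStep.succ (fs_zs e hm)).reach
  · refine (AStep.limit (fs_ss e hm)).reach.trans ?_
    exact areach_under (reach_zero n (oadd a' n.succPNat 0)) a j.succPNat
  · refine (AStep.limit (fs_ls e hm)).reach.trans ?_
    exact areach_under (reach_zero n (oadd (g n) 1 0)) a j.succPNat

theorem reach_coeff' (n : ℕ) (a : ONote) {i j : ℕ} (h : j ≤ i) :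
    AReach n (oadd a i.succPNat 0) (oadd a j.succPNat 0) := by
  induction i with
  | zero => rw [Nat.le_zero] at h; subst h; exact AReach.refl
  | succ i ih =>
    rcases Nat.lt_or_ge j (i+1) with h' | h'
    · exact (reach_coeff n a i).trans (ih (by omega))
    · have : j = i + 1 := by omega
      subst this; exact AReach.refl

/-- exponent descent: `ω^e ⟶ₙ* ω^{e'}` for a step `e ⟶ₙ e'`. -/
theorem astep_exp {n : ℕ} {e e' : ONote} (h : AStep n e e') :
    AReach n (oadd e 1 0) (oadd e' 1 0) := by
  have hm : (1 : ℕ+).natPred = 0 := rfl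
  cases h with
  | succ ha =>
    refine (AStep.limit (fs_sz ha hm)).reach.trans ?_
    exact reach_coeff' n e' (Nat.zero_le n)
  | limit ha => exact (AStep.limit (fs_lz ha hm)).reach

theorem areach_exp {n : ℕ} {e e' : ONote} (h : AReach n e e') :
    AReach n (oadd e 1 0) (oadd e' 1 0) := by
  induction h with
  | refl => exact AReach.refl
  | tail _ h2 ih => exact ih.trans (astep_exp h2)

/-- Bachmann-type property: each element of the fundamental sequence is reachable
from the next one, with any step parameter. -/
theorem reach_fs {α : ONote} {f : ℕ → ONote} (e : fundamentalSequence α = Sum.inr f)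
    (n k : ℕ) : AReach n (f (k + 1)) (f k) := by
  induction α generalizing f with
  | zero => rw [fundamentalSequence] at e; exact absurd e (by simp)
  | oadd a m b iha ihb =>
    rcases eb : fundamentalSequence b with (_ | b') | g
    · -- b = 0
      have hpb := fundamentalSequence_has_prop b
      rw [eb] at hpb
      subst hpb
      rcases ea : fundamentalSequence a with (_ | a') | g <;>
        rcases em : m.natPred with _ | m'
      · rw [fs_zz ea em] at e; exact absurd e (by simp)
      · rw [fs_zs ea em] at e; exact absurd e (by simp)
      · rw [fs_sz ea em] at e
        injection e with e; subst e
        exact reach_coeff n a' k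
      · rw [fs_ss ea em] at e
        injection e with e; subst e
        exact areach_under (reach_coeff n a' k) a m'.succPNat
      · rw [fs_lz ea em] at e
        injection e with e; subst e
        exact areach_exp (iha ea)
      · rw [fs_ls ea em] at e
        injection e with e; subst e
        exact areach_under (areach_exp (iha ea)) a m'.succPNat
    · rw [fs_tail_succ eb] at e; exact absurd e (by simp)
    · rw [fs_tail_limit eb] at e
      injection e with e; subst e
      exact areach_under (ihb eb) a m

theorem reach_fs' {α : ONote} {f : ℕ → ONote} (e : fundamentalSequence α = Sum.inr f)
    (n : ℕ) {x k : ℕ} (h : x ≤ k) : AReach n (f k) (f x) := by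
  induction k with
  | zero => rw [Nat.le_zero] at h; subst h; exact AReach.refl
  | succ k ih =>
    rcases Nat.lt_or_ge x (k+1) with h' | h'
    · exact (reach_fs e n k).trans (ih (by omega))
    · have : x = k + 1 := by omega
      subst this; exact AReach.refl

theorem ack_zero_le_one (o : ONote) : Ack o 0 ≤ 1 := by
  rcases e : fundamentalSequence o with (_ | a) | f
  · rw [Ack_zero' e]; exact Nat.zero_le 1
  · rw [Ack_succ' e]
    split <;> simp
  · rw [Ack_limit' e]
    have : f 0 < o := (AStep.limit (n := 0) e).lt
    exact ack_zero_le_one (f 0)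
  termination_by o

theorem iter_ge (g : ℕ → ℕ) (hg : ∀ m, 1 ≤ m → m < g m) (k : ℕ) : k + 1 ≤ g^[k] 1 := by
  induction k with
  | zero => simp
  | succ k ih =>
    rw [Function.iterate_succ_apply']
    have := hg (g^[k] 1) (by omega)
    omega

theorem ack_main (α : ONote) (hα : α ≠ 0) :
    (∀ x, 1 ≤ x → x < Ack α x) ∧ ∀ x y, x < y → Ack α x < Ack α y := by
  have IH : ∀ β, β < α → β ≠ 0 →
      (∀ x, 1 ≤ x → x < Ack β x) ∧ ∀ x y, x < y → Ack β x < Ack β y := by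
    intro β hβ hβ0
    exact ack_main β hβ0
  -- the key comparison along a single step
  have key : ∀ (n : ℕ) (δ γ : ONote), AStep n δ γ → δ < α → Ack γ n ≤ Ack δ n := by
    intro n δ γ h hδ
    cases h with
    | succ ea =>
      rw [Ack_succ' ea]
      rcases eq_or_ne γ 0 with rfl | hγ0
      · rw [if_pos rfl, Ack_zero' (o := 0) rfl]
        exact Nat.zero_le _
      · rw [if_neg hγ0]
        have hγα : γ < α := lt_trans (AStep.succ (n := n) ea).lt hδ
        obtain ⟨hexp, hmono⟩ := IH γ hγα hγ0
        cases n with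
        | zero => simpa using ack_zero_le_one γ
        | succ m =>
          rw [Function.iterate_succ_apply']
          have h1 : m + 1 ≤ (Ack γ)^[m] 1 := iter_ge (Ack γ) hexp m
          rcases eq_or_lt_of_le h1 with h2 | h2
          · rw [← h2]
          · exact le_of_lt (hmono _ _ h2)
    | limit ef =>
      rw [Ack_limit' ef]
  have reach_le : ∀ (n : ℕ) (δ γ : ONote), AReach n δ γ → δ < α → Ack γ n ≤ Ack δ n := by
    intro n δ γ h
    induction h using Relation.ReflTransGen.head_induction_on with
    | refl => intro _; exact le_refl _
    | head h1 h2 ih =>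
      intro hδ
      exact le_trans (ih (lt_trans h1.lt hδ)) (key _ _ _ h1 hδ)
  rcases e : fundamentalSequence α with (_ | a) | f
  · have hp := fundamentalSequence_has_prop α
    rw [e] at hp
    exact absurd hp hα
  · rw [Ack_succ' e]
    rcases eq_or_ne a 0 with rfl | ha0
    · rw [if_pos rfl]
      exact ⟨fun x hx => by omega, fun x y hxy => by omega⟩
    · rw [if_neg ha0]
      have haα : a < α := (AStep.succ (n := 0) e).lt
      obtain ⟨hexp, hmono⟩ := IH a haα ha0
      have hstep : ∀ k, (Ack a)^[k] 1 < (Ack a)^[k+1] 1 := by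
        intro k
        rw [Function.iterate_succ_apply']
        exact hexp _ (le_trans (by omega) (iter_ge (Ack a) hexp k))
      constructor
      · intro x _
        have := iter_ge (Ack a) hexp x
        omega
      · intro x y hxy
        exact strictMono_nat_of_lt_succ hstep hxy
  · have hp := fundamentalSequence_has_prop α
    rw [e] at hp
    have hflt : ∀ i, f i < α := fun i => (hp.2.1 i).2.1
    have hfmono : ∀ i j, i < j → f i < f j := by
      intro i j hij
      induction hij with
      | refl => exact (hp.2.1 i).1
      | step _ ih => exact lt_trans ih (hp.2.1 _).1
    have hfne : ∀ i, 1 ≤ i → f i ≠ 0 := by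
      intro i hi h0
      have h := hfmono 0 i hi
      rw [h0, lt_def] at h
      exact not_lt_of_ge (show (0 : Ordinal) ≤ (f 0).repr from zero_le) (by simpa using h)
    rw [Ack_limit' e]
    have hexp : ∀ x, 1 ≤ x → x < Ack (f x) x := fun x hx =>
      (IH (f x) (hflt x) (hfne x hx)).1 x hx
    refine ⟨hexp, ?_⟩
    intro x y hxy
    have hy1 : 1 ≤ y := by omega
    have h1 : Ack (f x) y ≤ Ack (f y) y :=
      reach_le y (f y) (f x) (reach_fs' e y (le_of_lt hxy)) (hflt y)
    rcases Nat.lt_or_ge 0 x with hx1 | hx0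
    · exact lt_of_lt_of_le ((IH (f x) (hflt x) (hfne x hx1)).2 x y hxy) h1
    · have hx : x = 0 := by omega
      subst hx
      have h2 : Ack (f 0) 0 ≤ 1 := ack_zero_le_one (f 0)
      have h3 : 1 < Ack (f y) y := lt_of_le_of_lt hy1 (hexp y hy1)
      show Ack (f 0) 0 < Ack (f y) y
      omega
  termination_by α


/-- For every ordinal `0 < α < ε₀`, the Ackermann function `A_α` is strictly monotone in its
argument: if `y > x` then `A_α(y) > A_α(x)`. -/
theorem ack_strictMono (α : ONote) (hNF : α.NF) (hα : 0 < α) (x y : ℕ) (hxy : x < y) :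
    Ack α x < Ack α y := by
  have hα0 : α ≠ 0 := by
    rintro rfl
    exact lt_irrefl _ hα
  exact (ack_main α hα0).2 x y hxy
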